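/- Let T be a standard shifted tableau of strict shape λ of n. Then: (a) i ∈ Peak(T) if and only if the values i−1, i, i+1 occur in the reading word w(T) in the order (i−1)(i+1)(i) or (i+1)(i−1)(i); (b) for every signed standard shifted tableau S whose underlying unsigned tableau is T, Peak(T) ⊆ Spike(Des(S)); and (c) for every subset D ⊆ {2,…,n−1} with Peak(T) ⊆ D, there exists a signed standard shifted tableau S whose underlying unsigned tableau is T such that Spike(Des(S)) = D. -/

import Mathlib

open scoped Classical

noncomputable section

/-! ### Formal power series in variables `x_0, x_1, x_2, …` over `ℚ`,
represented by their coefficient functions. -/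

abbrev QS : Type := (ℕ →₀ ℕ) → ℚ

/-- Gessel's fundamental quasisymmetric function `F_D` of degree `n`:
the coefficient of a monomial `e` is `1` exactly if the unique weakly increasing
sequence of variables with content `e` satisfies the descent condition
`i_j = i_{j+1} → j ∉ D` (positions `j = 1, …, n-1`). -/
def fundF (n : ℕ) (D : Set ℕ) : QS := fun e =>
  if ∃ f : Fin n → ℕ, Monotone f ∧
      (∀ (j : ℕ) (h : j + 1 < n), f ⟨j, Nat.lt_of_succ_lt h⟩ = f ⟨j + 1, h⟩ → (j + 1) ∉ D) ∧
      (∀ k : ℕ, e k = (Finset.univ.filter (fun p : Fin n => f p = k)).card)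
  then (1 : ℚ) else 0

/-- The shifted fundamental quasisymmetric function
`G_P = Σ_{D ⊆ {1,…,n−1}, P ⊆ Spike(D)} F_D`, where
`i ∈ Spike(D)` iff exactly one of `i-1, i` lies in `D`. -/
def fundG (n : ℕ) (P : Set ℕ) : QS :=
  ∑ D ∈ (Finset.Icc 1 (n - 1)).powerset,
    if ∀ i ∈ P, Xor' ((i - 1) ∈ D) (i ∈ D) then fundF n (↑D : Set ℕ) else 0

/-- A power series is symmetric if it is invariant under every permutation of
the variables. -/
def IsSymmetricFn (f : QS) : Prop :=
  ∀ (σ : Equiv.Perm ℕ) (e : ℕ →₀ ℕ), f (Finsupp.equivMapDomain σ e) = f e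

/-! ### Partitions, Young diagrams, semistandard tableaux and Schur functions -/

/-- A partition of `n`, as a weakly decreasing list of positive parts. -/
structure PartitionOf (n : ℕ) where
  parts : List ℕ
  sorted : parts.Pairwise (· ≥ ·)
  parts_pos : ∀ p ∈ parts, 0 < p
  sum_eq : parts.sum = n

/-- The cells `(r, j)`, `1 ≤ r ≤ ℓ`, `1 ≤ j ≤ λ_r`, of the Young diagram of a partition. -/
def PartitionOf.cells {n : ℕ} (μ : PartitionOf n) : Set (ℕ × ℕ) :=
  { c | ∃ h : c.1 - 1 < μ.parts.length,
      1 ≤ c.1 ∧ 1 ≤ c.2 ∧ c.2 ≤ μ.parts.get ⟨c.1 - 1, h⟩ }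

/-- A semistandard Young tableau of shape `μ`: entries (variable indices) weakly
increase along rows and strictly increase up columns. -/
structure SSYT {n : ℕ} (μ : PartitionOf n) where
  entry : ℕ × ℕ → ℕ
  zero_outside : ∀ c, c ∉ μ.cells → entry c = 0
  row_weak : ∀ r j j', (r, j) ∈ μ.cells → (r, j') ∈ μ.cells → j ≤ j' →
    entry (r, j) ≤ entry (r, j')
  col_strict : ∀ r r' j, (r, j) ∈ μ.cells → (r', j) ∈ μ.cells → r < r' →
    entry (r, j) < entry (r', j)

/-- The Schur function `s_μ = Σ_{T ∈ SSYT(μ)} X^T`. -/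
def schur (n : ℕ) (μ : PartitionOf n) : QS := fun e =>
  (Nat.card {T : SSYT μ // ∀ k : ℕ,
      Nat.card {c : ℕ × ℕ // c ∈ μ.cells ∧ T.entry c = k} = e k} : ℚ)

/-- A nonnegative integer combination of Schur functions. -/
def SchurPositive (f : QS) : Prop :=
  ∃ (k : ℕ) (m : Fin k → ℕ) (sh : (t : Fin k) → PartitionOf (m t)),
    f = ∑ t, schur (m t) (sh t)

/-! ### Strict partitions, shifted tableaux and Schur P-functions -/

/-- A strict partition of `n`, as a strictly decreasing list of positive parts. -/
structure StrictPartition (n : ℕ) where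
  parts : List ℕ
  sorted : parts.Pairwise (· > ·)
  parts_pos : ∀ p ∈ parts, 0 < p
  sum_eq : parts.sum = n

/-- The cells `(r, j)`, `1 ≤ r ≤ ℓ`, `r ≤ j ≤ λ_r + r - 1`, of the shifted Young
diagram of a strict partition. -/
def StrictPartition.cells {n : ℕ} (μ : StrictPartition n) : Set (ℕ × ℕ) :=
  { c | ∃ h : c.1 - 1 < μ.parts.length,
      1 ≤ c.1 ∧ c.1 ≤ c.2 ∧ c.2 ≤ μ.parts.get ⟨c.1 - 1, h⟩ + c.1 - 1 }

/-- A semistandard shifted tableau of shape `μ`.  An entry coded `2k+1` is the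
primed value `k′`, and an entry coded `2k+2` is the unprimed value `k`
(so that the code order is the order `0′ < 0 < 1′ < 1 < ⋯`).  Entries weakly
increase along rows and columns, each row has at most one `k′` for each `k`,
and each column has at most one `k` for each `k`. -/
structure ShSSYT {n : ℕ} (μ : StrictPartition n) where
  entry : ℕ × ℕ → ℕ
  zero_outside : ∀ c, c ∉ μ.cells → entry c = 0
  entry_pos : ∀ c ∈ μ.cells, 1 ≤ entry c
  row_weak : ∀ r j j', (r, j) ∈ μ.cells → (r, j') ∈ μ.cells → j ≤ j' →
    entry (r, j) ≤ entry (r, j')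
  col_weak : ∀ r r' j, (r, j) ∈ μ.cells → (r', j) ∈ μ.cells → r ≤ r' →
    entry (r, j) ≤ entry (r', j)
  row_primed : ∀ r j j', (r, j) ∈ μ.cells → (r, j') ∈ μ.cells →
    entry (r, j) = entry (r, j') → entry (r, j) % 2 = 1 → j = j'
  col_unprimed : ∀ r r' j, (r, j) ∈ μ.cells → (r', j) ∈ μ.cells →
    entry (r, j) = entry (r', j) → entry (r, j) % 2 = 0 → r = r'

/-- The Schur P-function `P_μ`: the sum of `X^{|S|}` over semistandard shifted
tableaux of shape `μ` with no primed entries on the main diagonal. -/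
def schurP (n : ℕ) (μ : StrictPartition n) : QS := fun e =>
  (Nat.card {S : ShSSYT μ //
      (∀ j : ℕ, (j, j) ∈ μ.cells → S.entry (j, j) % 2 = 0) ∧
      (∀ k : ℕ, Nat.card {c : ℕ × ℕ // c ∈ μ.cells ∧ (S.entry c - 1) / 2 = k} = e k)} : ℚ)

/-- A nonnegative integer combination of Schur P-functions. -/
def SchurPPositive (f : QS) : Prop :=
  ∃ (k : ℕ) (m : Fin k → ℕ) (sh : (t : Fin k) → StrictPartition (m t)),
    f = ∑ t, schurP (m t) (sh t)

/-! ### Standard (shifted) tableaux, descents, peaks, reading words -/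

/-- A standard shifted tableau of shape `μ`: the entries `1, …, n` each appear
once and increase along rows and columns. -/
structure ShSYT {n : ℕ} (μ : StrictPartition n) where
  entry : ℕ × ℕ → ℕ
  zero_outside : ∀ c, c ∉ μ.cells → entry c = 0
  bijOn : Set.BijOn entry μ.cells (Set.Icc 1 n)
  row_inc : ∀ r j j', (r, j) ∈ μ.cells → (r, j') ∈ μ.cells → j < j' →
    entry (r, j) < entry (r, j')
  col_inc : ∀ r r' j, (r, j) ∈ μ.cells → (r', j) ∈ μ.cells → r < r' →
    entry (r, j) < entry (r', j)

namespace ShSYT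

variable {n : ℕ} {μ : StrictPartition n}

/-- `i ∈ Des(T)` iff `i` lies in a strictly lower row than `i+1`. -/
def Des (T : ShSYT μ) : Set ℕ :=
  { i | ∃ c ∈ μ.cells, ∃ c' ∈ μ.cells, T.entry c = i ∧ T.entry c' = i + 1 ∧ c.1 < c'.1 }

/-- `i ∈ Peak(T)` iff `i - 1 ∉ Des(T)` and `i ∈ Des(T)`. -/
def Peak (T : ShSYT μ) : Set ℕ := { i | (i - 1) ∉ T.Des ∧ i ∈ T.Des }

/-- The cell containing the value `v`. -/
def cellOf (T : ShSYT μ) (v : ℕ) : ℕ × ℕ :=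
  Classical.epsilon (fun c => c ∈ μ.cells ∧ T.entry c = v)

/-- `before T u v` : the value `u` occurs before the value `v` in the reading word
of `T` (rows left to right, top row to bottom row, the top row being the one
with the largest row index). -/
def before (T : ShSYT μ) (u v : ℕ) : Prop :=
  (T.cellOf v).1 < (T.cellOf u).1 ∨
    ((T.cellOf u).1 = (T.cellOf v).1 ∧ (T.cellOf u).2 < (T.cellOf v).2)

end ShSYT

/-- A standard Young tableau of shape `μ`. -/
structure SYT {n : ℕ} (μ : PartitionOf n) where
  entry : ℕ × ℕ → ℕ
  zero_outside : ∀ c, c ∉ μ.cells → entry c = 0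
  bijOn : Set.BijOn entry μ.cells (Set.Icc 1 n)
  row_inc : ∀ r j j', (r, j) ∈ μ.cells → (r, j') ∈ μ.cells → j < j' →
    entry (r, j) < entry (r, j')
  col_inc : ∀ r r' j, (r, j) ∈ μ.cells → (r', j) ∈ μ.cells → r < r' →
    entry (r, j) < entry (r', j)

namespace SYT

variable {n : ℕ} {μ : PartitionOf n}

/-- `i ∈ Des(T)` iff `i` lies in a strictly lower row than `i+1`. -/
def Des (T : SYT μ) : Set ℕ :=
  { i | ∃ c ∈ μ.cells, ∃ c' ∈ μ.cells, T.entry c = i ∧ T.entry c' = i + 1 ∧ c.1 < c'.1 }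

/-- The cell containing the value `v`. -/
def cellOf (T : SYT μ) (v : ℕ) : ℕ × ℕ :=
  Classical.epsilon (fun c => c ∈ μ.cells ∧ T.entry c = v)

/-- Reading-word order on values (rows left to right, top row to bottom row). -/
def before (T : SYT μ) (u v : ℕ) : Prop :=
  (T.cellOf v).1 < (T.cellOf u).1 ∨
    ((T.cellOf u).1 = (T.cellOf v).1 ∧ (T.cellOf u).2 < (T.cellOf v).2)

end SYT

/-! ### Haiman's elementary (shifted) dual equivalence moves -/

/-- `posBtw lt x c y`: `c` occurs positionally between `x` and `y`,
where `lt` is the "occurs before" relation. -/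
def posBtw (lt : ℕ → ℕ → Prop) (x c y : ℕ) : Prop :=
  (lt x c ∧ lt c y) ∨ (lt y c ∧ lt c x)

/-- Swap the two values `a`, `b` in a filling. -/
def swapVals (a b : ℕ) (f : ℕ × ℕ → ℕ) : ℕ × ℕ → ℕ :=
  fun c => if f c = a then b else if f c = b then a else f c

/-- Swap the values of a function at `a` and `b`. -/
def swapFn {α : Type} (f : ℕ → α) (a b : ℕ) : ℕ → α :=
  fun v => if v = a then f b else if v = b then f a else f v

/-- The pair of values interchanged by Haiman's elementary shifted dual
equivalence move `b_i`, given the "occurs before" relation of the word: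
with `{a,b,c,d} = {i−1,i,i+1,i+2}`, if `a,b` are consecutive values, `c` is
consecutive with `a,b` and occurs between `a` and `b`, and `d` is consecutive
with `a,b,c` and occurs to the left of `c`, then `b_i` interchanges `a` and `b`;
otherwise it is the identity (`none`). -/
def bTarget (lt : ℕ → ℕ → Prop) (i : ℕ) : Option (ℕ × ℕ) :=
  if posBtw lt (i-1) (i+1) i ∧ lt (i+2) (i+1) then some (i-1, i)
  else if posBtw lt i (i-1) (i+1) ∧ lt (i+2) (i-1) then some (i, i+1)
  else if posBtw lt i (i+2) (i+1) ∧ lt (i-1) (i+2) then some (i, i+1)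
  else if posBtw lt (i+1) i (i+2) ∧ lt (i-1) i then some (i+1, i+2)
  else none

/-- The entry function of `b_i(T)` for a standard shifted tableau `T`. -/
def bRawEntry {n : ℕ} {μ : StrictPartition n} (i : ℕ) (T : ShSYT μ) : ℕ × ℕ → ℕ :=
  match bTarget T.before i with
  | some (a, b) => swapVals a b T.entry
  | none => T.entry

/-- Haiman's elementary shifted dual equivalence involution `b_i` on standard
shifted tableaux (acting through the reading word). -/
def bMove {n : ℕ} {μ : StrictPartition n} (i : ℕ) (T : ShSYT μ) : ShSYT μ :=
  if h : ∃ T' : ShSYT μ, T'.entry = bRawEntry i T then h.choose else T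

/-- The pair of values interchanged by the elementary dual equivalence move
`d_i`: if `i` occurs between `i-1` and `i+1` the move is the identity; if `i+1`
occurs between `i-1` and `i` it interchanges `i-1` and `i`; if `i-1` occurs
between `i` and `i+1` it interchanges `i` and `i+1`. -/
def dTarget (lt : ℕ → ℕ → Prop) (i : ℕ) : Option (ℕ × ℕ) :=
  if posBtw lt (i-1) (i+1) i then some (i-1, i)
  else if posBtw lt i (i-1) (i+1) then some (i, i+1)
  else none

/-- The entry function of `d_i(T)` for a standard Young tableau `T`. -/
def dRawEntry {n : ℕ} {μ : PartitionOf n} (i : ℕ) (T : SYT μ) : ℕ × ℕ → ℕ :=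
  match dTarget T.before i with
  | some (a, b) => swapVals a b T.entry
  | none => T.entry

/-- Haiman's elementary dual equivalence involution `d_i` on standard Young
tableaux (acting through the reading word). -/
def dMove {n : ℕ} {μ : PartitionOf n} (i : ℕ) (T : SYT μ) : SYT μ :=
  if h : ∃ T' : SYT μ, T'.entry = dRawEntry i T then h.choose else T

/-! ### Restricted classes and restricted statistics -/

/-- The equivalence class of `T` generated by the involutions `φ_j, …, φ_i`. -/
def classOf {A : Type} (φ : ℕ → A → A) (j i : ℕ) (T : A) : Set A :=
  { U | Relation.ReflTransGen (fun x y => ∃ k, j ≤ k ∧ k ≤ i ∧ φ k x = y) T U }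

/-- The restricted descent set `Des_{(j,i)}(T) = (Des(T) ∩ {j−1,…,i}) − (j−2)`. -/
def resDes {A : Type} (Des : A → Set ℕ) (j i : ℕ) (T : A) : Set ℕ :=
  (fun x => x - (j - 2)) '' (Des T ∩ Set.Icc (j - 1) i)

/-- The restricted peak set `Peak_{(j,i)}(T) = (Peak(T) ∩ {j−1,…,i+1}) − (j−2)`. -/
def resPeak {A : Type} (Peak : A → Set ℕ) (j i : ℕ) (T : A) : Set ℕ :=
  (fun x => x - (j - 2)) '' (Peak T ∩ Set.Icc (j - 1) (i + 1))

/-- `Σ_{U ∈ [T]_{(j,i)}} F_{Des_{(j,i)}(U)}`, with `F`'s of degree `m`. -/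
def classFSum {A : Type} (Des : A → Set ℕ) (φ : ℕ → A → A) (m j i : ℕ) (T : A) : QS :=
  ∑ᶠ U ∈ classOf φ j i T, fundF m (resDes Des j i U)

/-- `Σ_{U ∈ [T]_{(j,i)}} G_{Peak_{(j,i)}(U)}`, with `G`'s of degree `m`. -/
def classGSum {A : Type} (Peak : A → Set ℕ) (φ : ℕ → A → A) (m j i : ℕ) (T : A) : QS :=
  ∑ᶠ U ∈ classOf φ j i T, fundG m (resPeak Peak j i U)

/-! ### (Strong and weak) dual equivalence -/

/-- A (strong) dual equivalence for `(A, Des)`: a family of involutions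
`φ_i`, `1 < i < n`, satisfying axioms (i)–(iv). -/
structure IsDualEquiv (n : ℕ) {A : Type} (Des : A → Set ℕ) (φ : ℕ → A → A) : Prop where
  invol : ∀ i, 1 < i → i < n → ∀ T, φ i (φ i T) = T
  fixed_iff : ∀ i, 1 < i → i < n → ∀ T, (φ i T = T ↔ ((i - 1) ∈ Des T ↔ i ∈ Des T))
  des_far : ∀ i, 1 < i → i < n → ∀ T, φ i T ≠ T →
    ∀ h, (h < i - 2 ∨ i + 1 < h) → (h ∈ Des T ↔ h ∈ Des (φ i T))
  des_lo : ∀ i, 1 < i → i < n → ∀ T, φ i T ≠ T →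
    ¬((i - 2) ∈ Des T ↔ (i - 2) ∈ Des (φ i T)) → φ (i - 1) T ≠ T
  des_hi : ∀ i, 1 < i → i < n → ∀ T, φ i T ≠ T →
    ¬((i + 1) ∈ Des T ↔ (i + 1) ∈ Des (φ i T)) → φ (i + 1) T ≠ T
  des_swap : ∀ i, 1 < i → i < n → ∀ T, φ i T ≠ T →
    (((i - 1) ∈ Des T ↔ (i - 1) ∉ Des (φ i T)) ∧ (i ∈ Des T ↔ i ∉ Des (φ i T)))
  commutes : ∀ i j, 1 < i → i < n → 1 < j → j < n → j + 3 ≤ i →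
    ∀ T, φ j (φ i T) = φ i (φ j T)
  local_schur : ∀ i j, 1 < j → i < n → 1 ≤ i - j → i - j ≤ 3 → ∀ T,
    ∃ (m : ℕ) (ν : PartitionOf m), classFSum Des φ (i - j + 2) j i T = schur m ν

/-- A weak dual equivalence for `(A, Des)`: axioms (i), (ii), (iii) together
with the local conditions (iv-a) and (iv-b). -/
structure IsWeakDualEquiv (n : ℕ) {A : Type} (Des : A → Set ℕ) (φ : ℕ → A → A) : Prop where
  invol : ∀ i, 1 < i → i < n → ∀ T, φ i (φ i T) = T
  fixed_iff : ∀ i, 1 < i → i < n → ∀ T, (φ i T = T ↔ ((i - 1) ∈ Des T ↔ i ∈ Des T))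
  des_far : ∀ i, 1 < i → i < n → ∀ T, φ i T ≠ T →
    ∀ h, (h < i - 2 ∨ i + 1 < h) → (h ∈ Des T ↔ h ∈ Des (φ i T))
  des_lo : ∀ i, 1 < i → i < n → ∀ T, φ i T ≠ T →
    ¬((i - 2) ∈ Des T ↔ (i - 2) ∈ Des (φ i T)) → φ (i - 1) T ≠ T
  des_hi : ∀ i, 1 < i → i < n → ∀ T, φ i T ≠ T →
    ¬((i + 1) ∈ Des T ↔ (i + 1) ∈ Des (φ i T)) → φ (i + 1) T ≠ T
  des_swap : ∀ i, 1 < i → i < n → ∀ T, φ i T ≠ T →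
    (((i - 1) ∈ Des T ↔ (i - 1) ∉ Des (φ i T)) ∧ (i ∈ Des T ↔ i ∉ Des (φ i T)))
  commutes : ∀ i j, 1 < i → i < n → 1 < j → j < n → j + 3 ≤ i →
    ∀ T, φ j (φ i T) = φ i (φ j T)
  iva_pos : ∀ i, 2 < i → i < n → ∀ T, SchurPositive (classFSum Des φ 3 (i - 1) i T)
  iva_des : ∀ i, 2 < i → i + 1 < n → ∀ T,
    φ (i - 1) T ≠ T → φ i T ≠ T → φ (i + 1) T ≠ T →
    φ (i - 1) (φ i T) ≠ φ i T → φ i (φ i T) ≠ φ i T → φ (i + 1) (φ i T) ≠ φ i T →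
    resDes Des (i - 1) i '' classOf φ (i - 1) i T
      = resDes Des i (i + 1) '' classOf φ i (i + 1) T
  ivb_pos : ∀ i, 3 < i → i < n → ∀ T, SchurPositive (classFSum Des φ 4 (i - 2) i T)
  ivb_chain : ∀ i, 3 < i → i + 1 < n → ∀ T,
    φ (i + 1) T ≠ T → φ (i + 1) (φ i T) ≠ φ i T →
    φ (i + 1) (φ i (φ (i - 2) T)) = φ i (φ (i - 2) T) →
    ∀ m, 1 ≤ m →
      φ (i - 2) ((fun x => φ i (φ (i - 2) x))^[m - 1] (φ i T)) ≠
        (fun x => φ i (φ (i - 2) x))^[m - 1] (φ i T) →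
      φ i (φ (i - 2) ((fun x => φ i (φ (i - 2) x))^[m - 1] (φ i T))) ≠
        φ (i - 2) ((fun x => φ i (φ (i - 2) x))^[m - 1] (φ i T)) →
      φ (i + 1) ((fun x => φ i (φ (i - 2) x))^[m] (φ i T)) ≠
        (fun x => φ i (φ (i - 2) x))^[m] (φ i T)

/-! ### Shifted dual equivalence -/

/-- Axioms (i), (ii), (iii) of shifted dual equivalence for involutions
`φ_i`, `1 < i < n - 1`. -/
structure ShiftedDEBasic (n : ℕ) {A : Type} (Peak : A → Set ℕ) (φ : ℕ → A → A) : Prop where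
  invol : ∀ i, 1 < i → i + 1 < n → ∀ T, φ i (φ i T) = T
  fixed_iff : ∀ i, 1 < i → i + 1 < n → ∀ T,
    (φ i T = T ↔ (i ∉ Peak T ∧ (i + 1) ∉ Peak T))
  peak_move : ∀ i, 1 < i → i + 1 < n → ∀ T, φ i T ≠ T →
    (i ∈ Peak T ↔ (i + 1) ∈ Peak (φ i T))
  peak_far : ∀ i, 1 < i → i + 1 < n → ∀ T, φ i T ≠ T →
    ∀ h, (h ≤ i - 2 ∨ i + 3 ≤ h) → (h ∈ Peak T ↔ h ∈ Peak (φ i T))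
  commutes : ∀ i j, 1 < i → i + 1 < n → 1 < j → j + 1 < n → j + 4 ≤ i →
    ∀ T, φ j (φ i T) = φ i (φ j T)

/-- A (strong) shifted dual equivalence for `(A, Peak)`: axioms (i)–(iii)
together with the local Schur-P condition (iv). -/
structure IsShiftedDualEquiv (n : ℕ) {A : Type} (Peak : A → Set ℕ) (φ : ℕ → A → A)
    extends ShiftedDEBasic n Peak φ : Prop where
  local_P : ∀ i j, 1 < j → i + 1 < n → 1 ≤ i - j → i - j ≤ 4 → ∀ T,
    ∃ (m : ℕ) (ν : StrictPartition m), classGSum Peak φ (i - j + 4) j i T = schurP m ν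

/-! ### Signed permutations and the involutions of Definition 5.1 -/

/-- A signed permutation of `n`, recorded by the position `w.1 v` of each value
`v ∈ {1,…,n}` together with its sign `w.2 v` (`true` = primed). -/
def IsSignedPerm (n : ℕ) (w : (ℕ → ℕ) × (ℕ → Bool)) : Prop :=
  Set.BijOn w.1 (Set.Icc 1 n) (Set.Icc 1 n) ∧
  ∀ v, v ∉ Set.Icc 1 n → w.1 v = 0 ∧ w.2 v = false

abbrev SignedPerm (n : ℕ) : Type := { w : (ℕ → ℕ) × (ℕ → Bool) // IsSignedPerm n w }

/-- `i ∈ Des(w)` iff `i` is unprimed and appears to the right of `i+1`, or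
`i+1` is primed and appears to the right of `i`. -/
def rawSPDes (n : ℕ) (w : (ℕ → ℕ) × (ℕ → Bool)) (i : ℕ) : Prop :=
  1 ≤ i ∧ i < n ∧
    ((w.2 i = false ∧ w.1 (i + 1) < w.1 i) ∨ (w.2 (i + 1) = true ∧ w.1 i < w.1 (i + 1)))

def SignedPerm.Des {n : ℕ} (w : SignedPerm n) : Set ℕ := { i | rawSPDes n w.1 i }

/-- The leftmost of the values `i-1, i, i+1` (w.r.t. the position function `p`). -/
def leftV (p : ℕ → ℕ) (i : ℕ) : ℕ :=
  if p (i - 1) < p i ∧ p (i - 1) < p (i + 1) then i - 1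
  else if p i < p (i + 1) then i
  else i + 1

/-- The rightmost of the values `i-1, i, i+1` (w.r.t. the position function `p`). -/
def rightV (p : ℕ → ℕ) (i : ℕ) : ℕ :=
  if p i < p (i - 1) ∧ p (i + 1) < p (i - 1) then i - 1
  else if p (i + 1) < p i then i
  else i + 1

/-- The involution of Definition 5.1 on raw data: with `{a,b,c} = {i−1,i,i+1}`,
`a` leftmost and `c` rightmost, if `i ∉ Spike(w)` do nothing; else if exactly one
of `b, c` is primed, interchange the signs of `b` and `c`; else interchange the
values `a` and `c`, leaving the signs in the original positions. -/
def rawPhi (n i : ℕ) (w : (ℕ → ℕ) × (ℕ → Bool)) : (ℕ → ℕ) × (ℕ → Bool) :=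
  if Xor' (rawSPDes n w (i - 1)) (rawSPDes n w i) then
    let a := leftV w.1 i
    let c := rightV w.1 i
    let b := 3 * i - (a + c)
    if w.2 b ≠ w.2 c then (w.1, swapFn w.2 b c)
    else (swapFn w.1 a c, swapFn w.2 a c)
  else w

/-- The involution `φ_i` of Definition 5.1 on signed permutations. -/
def phiS (n : ℕ) (i : ℕ) (w : SignedPerm n) : SignedPerm n :=
  if h : IsSignedPerm n (rawPhi n i w.1) then ⟨rawPhi n i w.1, h⟩ else w

/-! ### Signed standard shifted tableaux and the involutions of Definition 5.2 -/

/-- A signed standard shifted tableau of shape `μ`: a standard shifted tableau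
together with a sign for each value (`true` = primed). -/
structure SignedShSYT {n : ℕ} (μ : StrictPartition n) where
  entry : ℕ × ℕ → ℕ
  sign : ℕ → Bool
  zero_outside : ∀ c, c ∉ μ.cells → entry c = 0
  sign_outside : ∀ v, v ∉ Set.Icc 1 n → sign v = false
  bijOn : Set.BijOn entry μ.cells (Set.Icc 1 n)
  row_inc : ∀ r j j', (r, j) ∈ μ.cells → (r, j') ∈ μ.cells → j < j' →
    entry (r, j) < entry (r, j')
  col_inc : ∀ r r' j, (r, j) ∈ μ.cells → (r', j) ∈ μ.cells → r < r' →
    entry (r, j) < entry (r', j)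

namespace SignedShSYT

variable {n : ℕ} {μ : StrictPartition n}

/-- `i ∈ Des(S)` iff `i` is unprimed and in a strictly lower row than `i+1`, or
`i+1` is primed and in a weakly lower row than `i`. -/
def Des (S : SignedShSYT μ) : Set ℕ :=
  { i | ∃ c ∈ μ.cells, ∃ c' ∈ μ.cells, S.entry c = i ∧ S.entry c' = i + 1 ∧
      ((S.sign i = false ∧ c.1 < c'.1) ∨ (S.sign (i + 1) = true ∧ c'.1 ≤ c.1)) }

/-- The cell containing the value `v`. -/
def cellOf (S : SignedShSYT μ) (v : ℕ) : ℕ × ℕ :=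
  Classical.epsilon (fun c => c ∈ μ.cells ∧ S.entry c = v)

/-- Reading-word order on values. -/
def before (S : SignedShSYT μ) (u v : ℕ) : Prop :=
  (S.cellOf v).1 < (S.cellOf u).1 ∨
    ((S.cellOf u).1 = (S.cellOf v).1 ∧ (S.cellOf u).2 < (S.cellOf v).2)

end SignedShSYT

/-- The first of the values `i-1, i, i+1` w.r.t. an "occurs before" relation. -/
def firstV (lt : ℕ → ℕ → Prop) (i : ℕ) : ℕ :=
  if lt (i - 1) i ∧ lt (i - 1) (i + 1) then i - 1
  else if lt i (i + 1) then i
  else i + 1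

/-- The last of the values `i-1, i, i+1` w.r.t. an "occurs before" relation. -/
def lastV (lt : ℕ → ℕ → Prop) (i : ℕ) : ℕ :=
  if lt i (i - 1) ∧ lt (i + 1) (i - 1) then i - 1
  else if lt (i + 1) i then i
  else i + 1

/-- The raw action of the map `ψ_i` of Definition 5.2 on a signed standard
shifted tableau, producing the new entry function and the new sign function:
with `{a,b,c} = {i−1,i,i+1}`, `a` first and `c` last in the reading word:
if `i ∉ Spike(S)` do nothing; else if `a` and `c` are in the same column, toggle
the sign on `c`; else if exactly one of `b, c` is signed, swap the signs of `b`
and `c`; else swap the values `a` and `c`, leaving the signs in the original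
positions. -/
def rawPsi {n : ℕ} {μ : StrictPartition n} (i : ℕ) (S : SignedShSYT μ) :
    (ℕ × ℕ → ℕ) × (ℕ → Bool) :=
  if Xor' ((i - 1) ∈ S.Des) (i ∈ S.Des) then
    let a := firstV S.before i
    let c := lastV S.before i
    let b := 3 * i - (a + c)
    if (S.cellOf a).2 = (S.cellOf c).2 then
      (S.entry, Function.update S.sign c (!(S.sign c)))
    else if S.sign b ≠ S.sign c then (S.entry, swapFn S.sign b c)
    else (swapVals a c S.entry, swapFn S.sign a c)
  else (S.entry, S.sign)

/-- The map `ψ_i` of Definition 5.2 on signed standard shifted tableaux. -/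
def psiMove {n : ℕ} {μ : StrictPartition n} (i : ℕ) (S : SignedShSYT μ) : SignedShSYT μ :=
  if h : ∃ S' : SignedShSYT μ, S'.entry = (rawPsi i S).1 ∧ S'.sign = (rawPsi i S).2
  then h.choose else S

/-! ### Isomorphisms of restricted classes -/

/-- The restricted class `([T]_{(j,i)}, Peak_{(j,i)})` under `φ_j, …, φ_i` is
isomorphic to `(ShSYT(ν), Peak)` under Haiman's involutions `b`. -/
def ResIso {A : Type} (Peak : A → Set ℕ) (φ : ℕ → A → A) (j i : ℕ) (T : A)
    {m : ℕ} (ν : StrictPartition m) : Prop :=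
  ∃ ψ : A → ShSYT ν,
    Set.BijOn ψ (classOf φ j i T) Set.univ ∧
    (∀ U ∈ classOf φ j i T, resPeak Peak j i U = ShSYT.Peak (ψ U)) ∧
    (∀ k, j ≤ k → k ≤ i → ∀ U ∈ classOf φ j i T, ψ (φ k U) = bMove (k - j + 2) (ψ U))

/-- The restricted classes `[T]_{(j,i)}` and `[S]_{(j,i)}` are isomorphic
(as sets with the restricted peak statistic and the involutions `φ_j, …, φ_i`). -/
def ResClassIso {A : Type} (Peak : A → Set ℕ) (φ : ℕ → A → A) (j i : ℕ) (T S : A) : Prop :=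
  ∃ ψ : A → A,
    Set.BijOn ψ (classOf φ j i T) (classOf φ j i S) ∧
    (∀ U ∈ classOf φ j i T, resPeak Peak j i U = resPeak Peak j i (ψ U)) ∧
    (∀ k, j ≤ k → k ≤ i → ∀ U ∈ classOf φ j i T, ψ (φ k U) = φ k (ψ U))

end

/-! ### Auxiliary lemmas for the proof -/

def dAux (D : Set ℕ) : ℕ → Prop
  | 0 => False
  | (k+1) => Xor' ((k+1) ∈ D) (dAux D k)

section proofAux

variable {n : ℕ} {lam : StrictPartition n}

lemma cellOf_spec (T : ShSYT lam) {v : ℕ} (hv : v ∈ Set.Icc 1 n) :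
    T.cellOf v ∈ lam.cells ∧ T.entry (T.cellOf v) = v := by
  have h : ∃ c, c ∈ lam.cells ∧ T.entry c = v := by
    obtain ⟨c, hc, e⟩ := T.bijOn.surjOn hv
    exact ⟨c, hc, e⟩
  exact Classical.epsilon_spec h

lemma eq_cellOf (T : ShSYT lam) {v : ℕ} {c : ℕ × ℕ} (hc : c ∈ lam.cells)
    (e : T.entry c = v) : c = T.cellOf v := by
  have hv : v ∈ Set.Icc 1 n := e ▸ T.bijOn.mapsTo hc
  obtain ⟨hc', e'⟩ := cellOf_spec T hv
  exact T.bijOn.injOn hc hc' (by rw [e, e'])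

lemma before_iff (T : ShSYT lam) (u v : ℕ) :
    T.before u v ↔ ((T.cellOf v).1 < (T.cellOf u).1 ∨
      ((T.cellOf u).1 = (T.cellOf v).1 ∧ (T.cellOf u).2 < (T.cellOf v).2)) := Iff.rfl

lemma desT_bounds (T : ShSYT lam) {i : ℕ} (h : i ∈ T.Des) : 1 ≤ i ∧ i + 1 ≤ n := by
  obtain ⟨c, hc, c', hc', e, e', _⟩ := h
  have h1 := T.bijOn.mapsTo hc
  have h2 := T.bijOn.mapsTo hc'
  rw [e] at h1; rw [e'] at h2
  exact ⟨h1.1, h2.2⟩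

lemma desT_iff (T : ShSYT lam) {i : ℕ} (h1 : 1 ≤ i) (h2 : i + 1 ≤ n) :
    i ∈ T.Des ↔ (T.cellOf i).1 < (T.cellOf (i+1)).1 := by
  constructor
  · rintro ⟨c, hc, c', hc', e, e', hlt⟩
    rw [eq_cellOf T hc e, eq_cellOf T hc' e'] at hlt
    exact hlt
  · intro hlt
    obtain ⟨hc, e⟩ := cellOf_spec T (show i ∈ Set.Icc 1 n from ⟨h1, by omega⟩)
    obtain ⟨hc', e'⟩ := cellOf_spec T (show i+1 ∈ Set.Icc 1 n from ⟨by omega, h2⟩)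
    exact ⟨_, hc, _, hc', e, e', hlt⟩

lemma samerow_col_lt (T : ShSYT lam) {u v : ℕ} (hu : u ∈ Set.Icc 1 n)
    (hv : v ∈ Set.Icc 1 n) (huv : u < v)
    (hr : (T.cellOf u).1 = (T.cellOf v).1) :
    (T.cellOf u).2 < (T.cellOf v).2 := by
  obtain ⟨hcu, eu⟩ := cellOf_spec T hu
  obtain ⟨hcv, ev⟩ := cellOf_spec T hv
  rcases lt_trichotomy (T.cellOf u).2 (T.cellOf v).2 with h | h | h
  · exact h
  · exfalso
    have hcc : T.cellOf u = T.cellOf v := Prod.ext_iff.mpr ⟨hr, h⟩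
    rw [hcc, ev] at eu
    omega
  · exfalso
    have e1 : ((T.cellOf u).1, (T.cellOf v).2) = T.cellOf v := Prod.ext_iff.mpr ⟨hr, rfl⟩
    have := T.row_inc (T.cellOf u).1 (T.cellOf v).2 (T.cellOf u).2
      (by rw [e1]; exact hcv) hcu h
    rw [e1] at this
    rw [eu, ev] at this
    omega

lemma one_not_desT (T : ShSYT lam) : 1 ∉ T.Des := by
  intro h
  have hb := desT_bounds T h
  obtain ⟨hc1, e1⟩ := cellOf_spec T (show (1:ℕ) ∈ Set.Icc 1 n from ⟨le_refl 1, by omega⟩)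
  obtain ⟨hc2, e2⟩ := cellOf_spec T (show (2:ℕ) ∈ Set.Icc 1 n from ⟨by omega, by omega⟩)
  have hlt : (T.cellOf 1).1 < (T.cellOf 2).1 := (desT_iff T (le_refl 1) hb.2).mp h
  obtain ⟨hlen, hg1, hg2, hg3⟩ := id hc2
  have h2r : 2 ≤ (T.cellOf 2).1 := by
    obtain ⟨_, hx, _, _⟩ := id hc1
    omega
  have hlen' : (T.cellOf 2).1 - 1 - 1 < lam.parts.length := by omega
  have hgt : lam.parts.get ⟨(T.cellOf 2).1 - 1 - 1, hlen'⟩ >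
      lam.parts.get ⟨(T.cellOf 2).1 - 1, hlen⟩ :=
    lam.sorted.rel_get_of_lt (by rw [Fin.mk_lt_mk]; omega)
  have hcA : (((T.cellOf 2).1 - 1, (T.cellOf 2).2) : ℕ × ℕ) ∈ lam.cells := by
    refine ⟨hlen', ?_, ?_, ?_⟩ <;> simp only [] <;> omega
  have hA := T.col_inc ((T.cellOf 2).1 - 1) (T.cellOf 2).1 (T.cellOf 2).2 hcA hc2 (by omega)
  have e2' : T.entry ((T.cellOf 2).1, (T.cellOf 2).2) = 2 := e2
  rw [e2'] at hA
  have hmemA := T.bijOn.mapsTo hcA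
  have eA : T.entry ((T.cellOf 2).1 - 1, (T.cellOf 2).2) = 1 := by
    have := hmemA.1; omega
  have hj2 : 2 ≤ (T.cellOf 2).2 := by omega
  have hcB : (((T.cellOf 2).1 - 1, (T.cellOf 2).2 - 1) : ℕ × ℕ) ∈ lam.cells := by
    refine ⟨hlen', ?_, ?_, ?_⟩ <;> simp only [] <;> omega
  have hB := T.row_inc ((T.cellOf 2).1 - 1) ((T.cellOf 2).2 - 1) (T.cellOf 2).2 hcB hcA (by omega)
  rw [eA] at hB
  have := (T.bijOn.mapsTo hcB).1
  omega

lemma peak_bounds (T : ShSYT lam) {i : ℕ} (h : i ∈ T.Peak) : 2 ≤ i ∧ i + 1 ≤ n := by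
  obtain ⟨hnd, hd⟩ := h
  have hb := desT_bounds T hd
  rcases Nat.lt_or_ge i 2 with h2 | h2
  · interval_cases i
    · omega
    · exact absurd hd (one_not_desT T)
  · exact ⟨h2, hb.2⟩

lemma peak_rows (T : ShSYT lam) {i : ℕ} (h : i ∈ T.Peak) :
    (T.cellOf i).1 ≤ (T.cellOf (i-1)).1 ∧ (T.cellOf i).1 < (T.cellOf (i+1)).1 := by
  have hb := peak_bounds T h
  obtain ⟨hnd, hd⟩ := h
  have e1 : i - 1 + 1 = i := by omega
  constructor
  · by_contra hx
    push_neg at hx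
    apply hnd
    rw [desT_iff T (show 1 ≤ i - 1 by omega) (by omega), e1]
    exact hx
  · exact (desT_iff T (by omega) hb.2).mp hd

lemma desS_iff (T : ShSYT lam) (S : SignedShSYT lam) (hS : S.entry = T.entry)
    {i : ℕ} (h1 : 1 ≤ i) (h2 : i + 1 ≤ n) :
    i ∈ S.Des ↔ ((S.sign i = false ∧ (T.cellOf i).1 < (T.cellOf (i+1)).1) ∨
      (S.sign (i+1) = true ∧ (T.cellOf (i+1)).1 ≤ (T.cellOf i).1)) := by
  constructor
  · rintro ⟨c, hc, c', hc', e, e', hor⟩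
    rw [hS] at e e'
    rw [eq_cellOf T hc e, eq_cellOf T hc' e'] at hor
    exact hor
  · intro hor
    obtain ⟨hc, e⟩ := cellOf_spec T (show i ∈ Set.Icc 1 n from ⟨h1, by omega⟩)
    obtain ⟨hc', e'⟩ := cellOf_spec T (show i+1 ∈ Set.Icc 1 n from ⟨by omega, h2⟩)
    exact ⟨_, hc, _, hc', by rw [hS]; exact e, by rw [hS]; exact e', hor⟩

end proofAux


/-- Let `T` be a standard shifted tableau of strict shape `λ` of
`n`.  Then (a) `i ∈ Peak(T)` iff `i−1, i, i+1` occur in the reading word in the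
order `(i−1)(i+1)(i)` or `(i+1)(i−1)(i)`; (b) for every signed standard shifted
tableau `S` with underlying unsigned tableau `T`, `Peak(T) ⊆ Spike(Des(S))`;
(c) for every `D ⊆ {2,…,n−1}` containing `Peak(T)` there is a signed standard
shifted tableau `S` with underlying unsigned tableau `T` and
`Spike(Des(S)) = D`. -/
theorem peak_spike_of_shifted_tableau
    {n : ℕ} (lam : StrictPartition n) (T : ShSYT lam) :
    (∀ i : ℕ, 2 ≤ i → i ≤ n - 1 →
      (i ∈ ShSYT.Peak T ↔
        ((T.before (i - 1) (i + 1) ∧ T.before (i + 1) i) ∨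
         (T.before (i + 1) (i - 1) ∧ T.before (i - 1) i)))) ∧
    (∀ S : SignedShSYT lam, S.entry = T.entry →
      ∀ i ∈ ShSYT.Peak T, Xor' ((i - 1) ∈ SignedShSYT.Des S) (i ∈ SignedShSYT.Des S)) ∧
    (∀ D : Set ℕ, D ⊆ Set.Icc 2 (n - 1) → ShSYT.Peak T ⊆ D →
      ∃ S : SignedShSYT lam, S.entry = T.entry ∧
        {i : ℕ | 2 ≤ i ∧ i ≤ n - 1 ∧
          Xor' ((i - 1) ∈ SignedShSYT.Des S) (i ∈ SignedShSYT.Des S)} = D) := by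
  refine ⟨?_, ?_, ?_⟩
  · -- part (a)
    intro i h2 hn1
    have hn : 3 ≤ n := by omega
    have him : i ∈ Set.Icc 1 n := ⟨by omega, by omega⟩
    have ham : i - 1 ∈ Set.Icc 1 n := ⟨by omega, by omega⟩
    have hcm : i + 1 ∈ Set.Icc 1 n := ⟨by omega, by omega⟩
    have e1 : i - 1 + 1 = i := by omega
    have hdesm1 : (i - 1) ∈ T.Des ↔ (T.cellOf (i-1)).1 < (T.cellOf i).1 := by
      rw [desT_iff T (show 1 ≤ i - 1 by omega) (by omega), e1]
    have hdes : i ∈ T.Des ↔ (T.cellOf i).1 < (T.cellOf (i+1)).1 :=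
      desT_iff T (by omega) (by omega)
    have A1 : (T.cellOf (i-1)).1 = (T.cellOf i).1 → (T.cellOf (i-1)).2 < (T.cellOf i).2 :=
      fun h => samerow_col_lt T ham him (by omega) h
    have A2 : (T.cellOf i).1 = (T.cellOf (i+1)).1 → (T.cellOf i).2 < (T.cellOf (i+1)).2 :=
      fun h => samerow_col_lt T him hcm (by omega) h
    have A3 : (T.cellOf (i-1)).1 = (T.cellOf (i+1)).1 →
        (T.cellOf (i-1)).2 < (T.cellOf (i+1)).2 :=
      fun h => samerow_col_lt T ham hcm (by omega) h
    simp only [before_iff]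
    constructor
    · rintro ⟨hnd, hd⟩
      have hd' := hdes.mp hd
      have hnd' : (T.cellOf i).1 ≤ (T.cellOf (i-1)).1 := by
        by_contra hx
        push_neg at hx
        exact hnd (hdesm1.mpr hx)
      rcases lt_trichotomy ((T.cellOf (i-1)).1) ((T.cellOf (i+1)).1) with h | h | h
      · refine Or.inr ⟨Or.inl h, ?_⟩
        rcases eq_or_lt_of_le hnd' with he | hl
        · exact Or.inr ⟨he.symm, A1 he.symm⟩
        · exact Or.inl hl
      · exact Or.inl ⟨Or.inr ⟨h, A3 h⟩, Or.inl hd'⟩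
      · exact Or.inl ⟨Or.inl h, Or.inl hd'⟩
    · rintro (⟨hb1, hb2⟩ | ⟨hb1, hb2⟩)
      · have hd' : (T.cellOf i).1 < (T.cellOf (i+1)).1 := by
          rcases hb2 with h | ⟨h, hc⟩
          · exact h
          · exact absurd (A2 h.symm) (by omega)
        refine ⟨?_, hdes.mpr hd'⟩
        rw [hdesm1]
        rcases hb1 with h | ⟨h, _⟩ <;> omega
      · have hnd' : (T.cellOf i).1 ≤ (T.cellOf (i-1)).1 := by
          rcases hb2 with h | ⟨h, _⟩ <;> omega
        refine ⟨by rw [hdesm1]; omega, hdes.mpr ?_⟩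
        rcases hb1 with h | ⟨h, hc⟩
        · omega
        · rcases eq_or_lt_of_le (show (T.cellOf i).1 ≤ (T.cellOf (i+1)).1 by omega) with he | hl
          · exfalso
            have h2' := A2 he
            have h1' := A1 (by omega)
            omega
          · exact hl
  · -- part (b)
    intro S hS i hp
    have hb := peak_bounds T hp
    have hr := peak_rows T hp
    have e1 : i - 1 + 1 = i := by omega
    have hdm1 : (i - 1) ∈ S.Des ↔ S.sign i = true := by
      rw [desS_iff T S hS (show 1 ≤ i - 1 by omega) (by omega), e1]
      constructor
      · rintro (⟨_, h⟩ | ⟨h, _⟩)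
        · exact absurd h (by omega)
        · exact h
      · intro h
        exact Or.inr ⟨h, hr.1⟩
    have hdi : i ∈ S.Des ↔ S.sign i = false := by
      rw [desS_iff T S hS (by omega) (by omega)]
      constructor
      · rintro (⟨h, _⟩ | ⟨_, h⟩)
        · exact h
        · exact absurd h (by omega)
      · intro h
        exact Or.inl ⟨h, hr.2⟩
    cases h : S.sign i <;> simp [Xor', hdm1, hdi, h]
  · -- part (c)
    intro D hD hPD
    classical
    let sg : ℕ → Bool := fun j =>
      if 1 ≤ j ∧ j ≤ n - 1 ∧ j ∈ T.Des then decide (¬ dAux D j)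
      else if 2 ≤ j ∧ j ≤ n ∧ (j - 1) ∉ T.Des then decide (dAux D (j - 1))
      else false
    have hsg : ∀ j, sg j =
        if 1 ≤ j ∧ j ≤ n - 1 ∧ j ∈ T.Des then decide (¬ dAux D j)
        else if 2 ≤ j ∧ j ≤ n ∧ (j - 1) ∉ T.Des then decide (dAux D (j - 1))
        else false := fun j => rfl
    have hout : ∀ v ∉ Set.Icc 1 n, sg v = false := by
      intro v hv
      have hv' : ¬(1 ≤ v ∧ v ≤ n) := by simpa [Set.mem_Icc] using hv
      rw [hsg, if_neg (fun h => hv' ⟨h.1, by omega⟩),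
        if_neg (fun h => hv' ⟨by omega, h.2.1⟩)]
    let S : SignedShSYT lam :=
      ⟨T.entry, sg, T.zero_outside, hout, T.bijOn, T.row_inc, T.col_inc⟩
    have hSe : S.entry = T.entry := rfl
    have hSsign : ∀ j, S.sign j = sg j := fun j => rfl
    have dsucc : ∀ k, dAux D (k+1) ↔ Xor' ((k+1) ∈ D) (dAux D k) := fun k => Iff.rfl
    have hkey : ∀ i, 1 ≤ i → i + 1 ≤ n → (i ∈ S.Des ↔ dAux D i) := by
      intro i h1 h2
      rw [desS_iff T S hSe h1 h2]
      by_cases hdes : i ∈ T.Des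
      · have hlt : (T.cellOf i).1 < (T.cellOf (i+1)).1 := (desT_iff T h1 h2).mp hdes
        have hs : S.sign i = decide (¬ dAux D i) := by
          rw [hSsign, hsg, if_pos ⟨h1, by omega, hdes⟩]
        constructor
        · rintro (⟨h, _⟩ | ⟨_, h⟩)
          · rw [hs] at h
            simpa using h
          · exact absurd h (by omega)
        · intro hdi
          exact Or.inl ⟨by rw [hs]; simpa using hdi, hlt⟩
      · have hle : (T.cellOf (i+1)).1 ≤ (T.cellOf i).1 := by
          by_contra hx
          push_neg at hx
          exact hdes ((desT_iff T h1 h2).mpr hx)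
        have hsv : S.sign (i+1) = decide (dAux D i) := by
          rw [hSsign, hsg]
          by_cases hp1 : 1 ≤ i + 1 ∧ i + 1 ≤ n - 1 ∧ (i+1) ∈ T.Des
          · rw [if_pos hp1]
            have hpk : (i+1) ∈ T.Peak := ⟨by simpa using hdes, hp1.2.2⟩
            have hDmem : (i+1) ∈ D := hPD hpk
            have hd1 : dAux D (i+1) ↔ ¬ dAux D i := by
              rw [dsucc]
              simp [Xor', hDmem]
            simp only [hd1, not_not]
          · rw [if_neg hp1, if_pos ⟨by omega, by omega, by simpa using hdes⟩]
            simp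
        constructor
        · rintro (⟨_, h⟩ | ⟨h, _⟩)
          · exact absurd h (by omega)
          · rw [hsv] at h
            simpa using h
        · intro hdi
          exact Or.inr ⟨by rw [hsv]; simpa using hdi, hle⟩
    refine ⟨S, rfl, ?_⟩
    ext i
    simp only [Set.mem_setOf_eq]
    constructor
    · rintro ⟨h2i, hin, hx⟩
      have hn3 : 3 ≤ n := by omega
      have e1 : i - 1 + 1 = i := by omega
      have k1 := hkey (i-1) (by omega) (by omega)
      have k2 := hkey i (by omega) (by omega)
      have k3 : dAux D i ↔ Xor' (i ∈ D) (dAux D (i-1)) := by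
        have h := dsucc (i-1)
        rwa [e1] at h
      rw [k1, k2, k3] at hx
      simp only [Xor', xor_def] at hx
      tauto
    · intro hiD
      have hb := hD hiD
      rw [Set.mem_Icc] at hb
      have h2i : 2 ≤ i := hb.1
      have hin : i ≤ n - 1 := hb.2
      have hn3 : 3 ≤ n := by omega
      refine ⟨h2i, hin, ?_⟩
      have e1 : i - 1 + 1 = i := by omega
      have k1 := hkey (i-1) (by omega) (by omega)
      have k2 := hkey i (by omega) (by omega)
      have k3 : dAux D i ↔ Xor' (i ∈ D) (dAux D (i-1)) := by
        have h := dsucc (i-1)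
        rwa [e1] at h
      rw [k1, k2, k3]
      simp only [Xor', xor_def]
      tauto
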